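/- Let γ ≥ 0, β > 0, and let V : ℝ → ℝ be twice differentiable with V'(0) = 0 and V''(0) = −β. Suppose for some δ > 0 that ℘ : (0, δ) → ℝ is differentiable, strictly positive, satisfies ℘'(x) = −γ − V'(x)/℘(x) on (0, δ), and ℘(x) → 0 as x → 0⁺. If the limit L = lim_{x → 0⁺} ℘(x)/x exists and L > 0, then L² + γL − β = 0, hence L = λ₊ = (−γ + √(γ² + 4β))/2. Symmetrically, if V'(a) = 0 and V''(a) = −β at a point a, ℘ is differentiable and strictly positive on (a − δ, a) with ℘'(x) = −γ − V'(x)/℘(x) and ℘(x) → 0 as x → a⁻, and the limit M = lim_{x → a⁻} ℘(x)/(x − a) exists with M < 0, then M² + γM − β = 0, hence M = λ₋ = (−γ − √(γ² + 4β))/2. -/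

import Mathlib

open Filter Set Topology

theorem orbit_tangency_slopes_at_saddle
    (γ β : ℝ) (hγ : 0 ≤ γ) (hβ : 0 < β)
    (V : ℝ → ℝ) (hV1 : Differentiable ℝ V) (hV2 : Differentiable ℝ (deriv V)) :
    (∀ δ : ℝ, 0 < δ → ∀ P : ℝ → ℝ,
      deriv V 0 = 0 → deriv (deriv V) 0 = -β →
      (∀ x ∈ Set.Ioo (0:ℝ) δ, DifferentiableAt ℝ P x) →
      (∀ x ∈ Set.Ioo (0:ℝ) δ, 0 < P x) →
      (∀ x ∈ Set.Ioo (0:ℝ) δ, deriv P x = -γ - deriv V x / P x) →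
      Tendsto P (nhdsWithin 0 (Set.Ioi 0)) (nhds 0) →
      ∀ L : ℝ, Tendsto (fun x => P x / x) (nhdsWithin 0 (Set.Ioi 0)) (nhds L) →
        0 < L →
        L ^ 2 + γ * L - β = 0 ∧ L = (-γ + Real.sqrt (γ ^ 2 + 4 * β)) / 2) ∧
    (∀ a δ : ℝ, 0 < δ → ∀ P : ℝ → ℝ,
      deriv V a = 0 → deriv (deriv V) a = -β →
      (∀ x ∈ Set.Ioo (a - δ) a, DifferentiableAt ℝ P x) →
      (∀ x ∈ Set.Ioo (a - δ) a, 0 < P x) →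
      (∀ x ∈ Set.Ioo (a - δ) a, deriv P x = -γ - deriv V x / P x) →
      Tendsto P (nhdsWithin a (Set.Iio a)) (nhds 0) →
      ∀ M : ℝ, Tendsto (fun x => P x / (x - a)) (nhdsWithin a (Set.Iio a)) (nhds M) →
        M < 0 →
        M ^ 2 + γ * M - β = 0 ∧ M = (-γ - Real.sqrt (γ ^ 2 + 4 * β)) / 2) := by
  constructor
  · intro δ hδ P hV'0 hV''0 hPdiff hPpos hPode hP0 L hPL hL
    have hL' : L ≠ 0 := hL.ne'
    have hmem : Ioo (0:ℝ) δ ∈ 𝓝[>] (0:ℝ) :=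
      Ioo_mem_nhdsGT_of_mem ⟨le_refl 0, hδ⟩
    have hmono : 𝓝[>] (0:ℝ) ≤ 𝓝[≠] (0:ℝ) :=
      nhdsWithin_mono 0 (fun x hx => ne_of_gt hx)
    -- slope of V' at 0
    have hslope : Tendsto (fun x => deriv V x / x) (𝓝[>] (0:ℝ)) (𝓝 (-β)) := by
      have h := (hV2 0).hasDerivAt
      rw [hV''0] at h
      have h2 := (hasDerivAt_iff_tendsto_slope.mp h).mono_left hmono
      refine h2.congr (fun x => ?_)
      simp [slope_def_field, hV'0]
    have hxP : Tendsto (fun x => x / P x) (𝓝[>] (0:ℝ)) (𝓝 L⁻¹) := by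
      refine (hPL.inv₀ hL').congr (fun x => ?_)
      rw [inv_div]
    have hVP : Tendsto (fun x => deriv V x / P x) (𝓝[>] (0:ℝ)) (𝓝 (-β * L⁻¹)) := by
      refine (hslope.mul hxP).congr' ?_
      filter_upwards [hmem] with x hx
      have hx0 : x ≠ 0 := ne_of_gt hx.1
      have hPx : P x ≠ 0 := (hPpos x hx).ne'
      field_simp
    have hderivP : Tendsto (deriv P) (𝓝[>] (0:ℝ)) (𝓝 (-γ - (-β * L⁻¹))) := by
      refine (tendsto_const_nhds.sub hVP).congr' ?_
      filter_upwards [hmem] with x hx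
      rw [hPode x hx]
    have hlhop : Tendsto (fun x => P x / x) (𝓝[>] (0:ℝ)) (𝓝 (-γ - (-β * L⁻¹))) := by
      have := deriv.lhopital_zero_nhdsGT (f := P) (g := fun x => x)
        (Eventually.mono hmem (fun x hx => hPdiff x hx))
        (by filter_upwards with x; simp)
        hP0 (tendsto_id.mono_right nhdsWithin_le_nhds)
        (by refine hderivP.congr (fun x => ?_); simp)
      exact this
    have heq : L = -γ - (-β * L⁻¹) := tendsto_nhds_unique hPL hlhop
    have hq : L ^ 2 + γ * L - β = 0 := by
      field_simp at heq
      nlinarith [heq]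
    refine ⟨hq, ?_⟩
    have h1 : γ ^ 2 + 4 * β = (2 * L + γ) ^ 2 := by nlinarith [hq]
    have h2 : Real.sqrt (γ ^ 2 + 4 * β) = 2 * L + γ := by
      rw [h1, Real.sqrt_sq (by linarith)]
    rw [h2]; ring
  · intro a δ hδ P hV'a hV''a hPdiff hPpos hPode hP0 M hPM hM
    have hM' : M ≠ 0 := hM.ne
    have hmem : Ioo (a - δ) a ∈ 𝓝[<] a :=
      Ioo_mem_nhdsLT_of_mem ⟨by linarith, le_refl a⟩
    have hmono : 𝓝[<] a ≤ 𝓝[≠] a :=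
      nhdsWithin_mono a (fun x hx => ne_of_lt hx)
    have hslope : Tendsto (fun x => deriv V x / (x - a)) (𝓝[<] a) (𝓝 (-β)) := by
      have h := (hV2 a).hasDerivAt
      rw [hV''a] at h
      have h2 := (hasDerivAt_iff_tendsto_slope.mp h).mono_left hmono
      refine h2.congr (fun x => ?_)
      simp [slope_def_field, hV'a]
    have hxP : Tendsto (fun x => (x - a) / P x) (𝓝[<] a) (𝓝 M⁻¹) := by
      refine (hPM.inv₀ hM').congr (fun x => ?_)
      rw [inv_div]
    have hVP : Tendsto (fun x => deriv V x / P x) (𝓝[<] a) (𝓝 (-β * M⁻¹)) := by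
      refine (hslope.mul hxP).congr' ?_
      filter_upwards [hmem] with x hx
      have hx0 : x - a ≠ 0 := sub_ne_zero.mpr (ne_of_lt hx.2)
      have hPx : P x ≠ 0 := (hPpos x hx).ne'
      field_simp
    have hderivP : Tendsto (deriv P) (𝓝[<] a) (𝓝 (-γ - (-β * M⁻¹))) := by
      refine (tendsto_const_nhds.sub hVP).congr' ?_
      filter_upwards [hmem] with x hx
      rw [hPode x hx]
    have hga : Tendsto (fun x => x - a) (𝓝[<] a) (𝓝 0) := by
      have : Tendsto (fun x : ℝ => x - a) (𝓝[<] a) (𝓝 (a - a)) :=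
        (tendsto_id.mono_right nhdsWithin_le_nhds).sub_const a
      simpa using this
    have hlhop : Tendsto (fun x => P x / (x - a)) (𝓝[<] a) (𝓝 (-γ - (-β * M⁻¹))) := by
      exact deriv.lhopital_zero_nhdsLT (f := P) (g := fun x => x - a)
        (Eventually.mono hmem (fun x hx => hPdiff x hx))
        (by filter_upwards with x; simp)
        hP0 hga
        (by refine hderivP.congr (fun x => ?_); simp)
    have heq : M = -γ - (-β * M⁻¹) := tendsto_nhds_unique hPM hlhop
    have hq : M ^ 2 + γ * M - β = 0 := by
      field_simp at heq
      nlinarith [heq]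
    refine ⟨hq, ?_⟩
    have hMγ : M + γ < 0 := by nlinarith [hq]
    have h1 : γ ^ 2 + 4 * β = (2 * M + γ) ^ 2 := by nlinarith [hq]
    have h2 : Real.sqrt (γ ^ 2 + 4 * β) = -(2 * M + γ) := by
      rw [h1, Real.sqrt_sq_eq_abs, abs_of_nonpos (by linarith)]
    rw [h2]; ring
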